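/- For every even d ≥ 0, the group Z_2^d contains a Sidon set of size 2^{d/2}; that is, β(Z_2^d) ≥ 2^{d/2} for even d. -/

import Mathlib

/-- A Sidon set in an abelian group: all pairwise sums of (distinct) elements are
different, i.e. whenever `a + b = c + d` for `a, b, c, d ∈ A` (with `a ≠ b`, `c ≠ d`),
then `{a, b} = {c, d}`. -/
def IsSidonSet {G : Type*} [AddCommGroup G] (A : Set G) : Prop :=
  ∀ a ∈ A, ∀ b ∈ A, ∀ c ∈ A, ∀ d ∈ A,
    a ≠ b → c ≠ d → a + b = c + d → ({a, b} : Set G) = {c, d}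

/-- `β G`: the largest size of a Sidon set in the finite abelian group `G`. -/
noncomputable def sidonNumber (G : Type*) [AddCommGroup G] [Fintype G] : ℕ :=
  sSup {n | ∃ A : Finset G, IsSidonSet (A : Set G) ∧ A.card = n}

lemma IsSidonSet.map {G H : Type*} [AddCommGroup G] [AddCommGroup H] (e : G ≃+ H)
    {A : Set G} (h : IsSidonSet A) : IsSidonSet (e '' A) := by
  rintro _ ⟨a, ha, rfl⟩ _ ⟨b, hb, rfl⟩ _ ⟨c, hc, rfl⟩ _ ⟨d, hd, rfl⟩ hab hcd hsum
  have h1 : a ≠ b := fun h => hab (congrArg e h)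
  have h2 : c ≠ d := fun h => hcd (congrArg e h)
  have h3 : a + b = c + d := e.injective (by simpa using hsum)
  have := h a ha b hb c hc d hd h1 h2 h3
  rw [show ({e a, e b} : Set H) = e '' {a, b} by rw [Set.image_pair],
    show ({e c, e d} : Set H) = e '' {c, d} by rw [Set.image_pair], this]

lemma cube_key {F : Type*} [Field F] [CharP F 2] {x y u v : F} (hxy : x ≠ y)
    (h1 : x + y = u + v) (h2 : x ^ 3 + y ^ 3 = u ^ 3 + v ^ 3) :
    (u = x ∧ v = y) ∨ (u = y ∧ v = x) := by
  have two : (2 : F) = 0 := by exact_mod_cast CharP.cast_eq_zero F 2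
  have hs : x + y ≠ 0 := by
    intro h0
    exact hxy (by linear_combination h0 - y * two)
  have e1 : x ^ 3 + y ^ 3 = (x + y) ^ 3 + x * y * (x + y) := by
    linear_combination (-2 * x ^ 2 * y - 2 * x * y ^ 2) * two
  have e2 : u ^ 3 + v ^ 3 = (u + v) ^ 3 + u * v * (u + v) := by
    linear_combination (-2 * u ^ 2 * v - 2 * u * v ^ 2) * two
  have hp : x * y = u * v := by
    have : x * y * (x + y) = u * v * (x + y) := by
      linear_combination h2 - e1 + e2 - ((x+y)^2+(x+y)*(u+v)+(u+v)^2+u*v) * h1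
    exact mul_right_cancel₀ hs this
  have hfac : (v - x) * (v - y) = 0 := by linear_combination (-v) * h1 + hp
  rcases mul_eq_zero.1 hfac with h | h
  · right
    have hv : v = x := sub_eq_zero.1 h
    refine ⟨?_, hv⟩
    have : x + y = u + x := by rw [h1, hv]
    linear_combination -this
  · left
    have hv : v = y := sub_eq_zero.1 h
    refine ⟨?_, hv⟩
    have : x + y = u + y := by rw [h1, hv]
    linear_combination -this

lemma cube_sidon {F : Type*} [Field F] [CharP F 2] [Fintype F] [DecidableEq F] :
    IsSidonSet ((Finset.univ.image fun x : F => (x, x ^ 3)) : Set (F × F)) := by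
  intro a ha b hb c hc d hd hab hcd hsum
  simp only [Finset.coe_image, Finset.coe_univ, Set.image_univ, Set.mem_range] at ha hb hc hd
  obtain ⟨x, rfl⟩ := ha; obtain ⟨y, rfl⟩ := hb; obtain ⟨u, rfl⟩ := hc; obtain ⟨v, rfl⟩ := hd
  have hxy : x ≠ y := fun h => hab (by rw [h])
  have h1 : x + y = u + v := congrArg Prod.fst hsum
  have h2 : x ^ 3 + y ^ 3 = u ^ 3 + v ^ 3 := congrArg Prod.snd hsum
  rcases cube_key hxy h1 h2 with ⟨rfl, rfl⟩ | ⟨rfl, rfl⟩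
  · rfl
  · exact Set.pair_comm _ _

lemma le_sidonNumber {G : Type*} [AddCommGroup G] [Fintype G] (A : Finset G)
    (hA : IsSidonSet (A : Set G)) : A.card ≤ sidonNumber G := by
  apply le_csSup
  · exact ⟨Fintype.card G, fun n ⟨B, _, hB⟩ => hB ▸ B.card_le_univ⟩
  · exact ⟨A, hA, rfl⟩

/-- the additive equivalence `(Fin k → M) × (Fin k → M) ≃+ (Fin (k+k) → M)` -/
def prodFunAddEquiv (k : ℕ) (M : Type*) [AddCommMonoid M] :
    ((Fin k → M) × (Fin k → M)) ≃+ (Fin (k + k) → M) where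
  toFun p := fun i => Sum.elim p.1 p.2 (finSumFinEquiv.symm i)
  invFun f := (fun i => f (finSumFinEquiv (.inl i)), fun i => f (finSumFinEquiv (.inr i)))
  left_inv p := by
    refine Prod.ext ?_ ?_ <;> funext i <;>
      simp only [Equiv.symm_apply_apply, Sum.elim_inl, Sum.elim_inr]
  right_inv f := by
    funext i
    cases h : finSumFinEquiv.symm i <;>
      rw [← finSumFinEquiv.apply_symm_apply i, h] <;>
      simp only [Equiv.symm_apply_apply, Sum.elim_inl, Sum.elim_inr]
  map_add' p q := by
    funext i
    cases h : finSumFinEquiv.symm i <;> simp [h]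

/-- For every even `d ≥ 0`, the group `ℤ₂^d` contains a Sidon set of size `2^(d/2)`;
that is, `β(ℤ₂^d) ≥ 2^(d/2)` for even `d`. -/
theorem sidon_lower_bound_even (d : ℕ) (hd : Even d) :
    (∃ A : Finset (Fin d → ZMod 2),
      IsSidonSet (A : Set (Fin d → ZMod 2)) ∧ A.card = 2 ^ (d / 2)) ∧
    2 ^ (d / 2) ≤ sidonNumber (Fin d → ZMod 2) := by
  obtain ⟨k, rfl⟩ := hd
  have hdk : (k + k) / 2 = k := by omega
  rw [hdk]
  rcases Nat.eq_zero_or_pos k with rfl | hk0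
  · refine ⟨⟨{0}, ?_, by simp⟩, ?_⟩
    · intro a ha b hb c hc d hd hab hcd _
      simp only [Finset.coe_singleton, Set.mem_singleton_iff] at ha hb
      exact absurd (ha.trans hb.symm) hab
    · have : ({0} : Finset (Fin (0+0) → ZMod 2)).card = 1 := by simp
      simpa [this] using le_sidonNumber ({0} : Finset (Fin (0+0) → ZMod 2)) (by
        intro a ha b hb c hc d hd hab hcd _
        simp only [Finset.coe_singleton, Set.mem_singleton_iff] at ha hb
        exact absurd (ha.trans hb.symm) hab)
  · have hk : k ≠ 0 := hk0.ne'
    classical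
    haveI : Fintype (GaloisField 2 k) := Fintype.ofFinite _
    have hcard : Fintype.card (GaloisField 2 k) = 2 ^ k := by
      rw [← Nat.card_eq_fintype_card]; exact GaloisField.card 2 k hk
    -- linear equiv F ≃ₗ[ZMod 2] (Fin k → ZMod 2)
    let b := Module.finBasisOfFinrankEq (ZMod 2) (GaloisField 2 k) (GaloisField.finrank 2 hk)
    let e1 : GaloisField 2 k ≃ₗ[ZMod 2] (Fin k → ZMod 2) := b.equivFun
    let E : (GaloisField 2 k × GaloisField 2 k) ≃+ (Fin (k + k) → ZMod 2) :=
      (e1.prodCongr e1).toAddEquiv.trans (prodFunAddEquiv k (ZMod 2))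
    let S : Finset (GaloisField 2 k × GaloisField 2 k) :=
      Finset.univ.image fun x : GaloisField 2 k => (x, x ^ 3)
    have hScard : S.card = 2 ^ k := by
      rw [← hcard]
      rw [Finset.card_image_of_injective _
        (fun x y h => by simpa using congrArg Prod.fst h), Finset.card_univ]
    let A : Finset (Fin (k + k) → ZMod 2) := S.image E
    have hAcard : A.card = 2 ^ k := by
      rw [Finset.card_image_of_injective _ E.injective, hScard]
    have hA : IsSidonSet (A : Set (Fin (k + k) → ZMod 2)) := by
      have := IsSidonSet.map E cube_sidon
      simpa [A, S, Finset.coe_image] using this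
    exact ⟨⟨A, hA, hAcard⟩, hAcard ▸ le_sidonNumber A hA⟩
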